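/- Let θ be an irrational real number and f : ℕ → ℂ the function f(n) = e^{2πi n θ}. Let ω be a nonprincipal ultrafilter on ℕ and let g : ℕ → ℂ be a bounded function such that there exists an integer k ≥ 1 with E_ω(|g(·+k) − g|²) = 0. Then E_ω(n ↦ f(n)·conj(g(n))) = 0. -/

import Mathlib

open Filter Finset

/-- The function `n ↦ e^{2πi n θ}`. -/
noncomputable def linExp (θ : ℝ) (n : ℕ) : ℂ :=
  Complex.exp (2 * Real.pi * Complex.I * (n : ℂ) * (θ : ℂ))

lemma linExp_norm (θ : ℝ) (n : ℕ) : ‖linExp θ n‖ = 1 := by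
  have : linExp θ n = Complex.exp ((2 * Real.pi * n * θ : ℝ) * Complex.I) := by
    unfold linExp; congr 1; push_cast; ring
  rw [this, Complex.norm_exp_ofReal_mul_I]

lemma linExp_add (θ : ℝ) (n k : ℕ) : linExp θ (n + k) = linExp θ n * linExp θ k := by
  unfold linExp
  rw [← Complex.exp_add]
  congr 1
  push_cast
  ring

lemma linExp_ne_one (θ : ℝ) (hθ : Irrational θ) (k : ℕ) (hk : 1 ≤ k) :
    linExp θ k ≠ 1 := by
  intro h
  rw [linExp, Complex.exp_eq_one_iff] at h
  obtain ⟨n, hn⟩ := h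
  have h2 : (2 * (Real.pi : ℂ) * Complex.I) ≠ 0 := Complex.two_pi_I_ne_zero
  have hkθ : (k : ℂ) * θ = (n : ℂ) := by
    apply mul_left_cancel₀ h2
    rw [show 2 * (Real.pi : ℂ) * Complex.I * ((k : ℂ) * θ)
        = 2 * Real.pi * Complex.I * (k : ℂ) * θ by ring, hn]
    ring
  have hreal : (k : ℝ) * θ = (n : ℝ) := by exact_mod_cast hkθ
  have hk0 : (k : ℝ) ≠ 0 := by positivity
  apply hθ
  refine ⟨(n : ℚ) / (k : ℚ), ?_⟩
  have : θ = (n : ℝ) / (k : ℝ) := by field_simp; linarith [hreal]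
  rw [this]
  push_cast
  ring

/-- For `θ` irrational, the function `n ↦ e^{2πi n θ}` is orthogonal
(with respect to any mean state) to every bounded essentially periodic function. -/
theorem linExp_orthogonal_essentiallyPeriodic (θ : ℝ) (hθ : Irrational θ)
    (ω : Ultrafilter ℕ) (hω : (ω : Filter ℕ) ≤ Filter.cofinite)
    (g : ℕ → ℂ) (hb : ∃ C : ℝ, ∀ n, ‖g n‖ ≤ C)
    (hper : ∃ k : ℕ, 1 ≤ k ∧
      Filter.Tendsto (fun N : ℕ => (∑ n ∈ Finset.range N, ‖g (n + k) - g n‖ ^ 2) / N)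
        (ω : Filter ℕ) (nhds 0)) :
    Filter.Tendsto (fun N : ℕ =>
        (1 / (N : ℂ)) * ∑ n ∈ Finset.range N, linExp θ n * (starRingEnd ℂ) (g n))
      (ω : Filter ℕ) (nhds 0) := by
  obtain ⟨C, hC⟩ := hb
  obtain ⟨k, hk, hps⟩ := hper
  have hC0 : 0 ≤ C := le_trans (norm_nonneg _) (hC 0)
  set lam : ℂ := linExp θ k with hlam
  have hlam1 : lam ≠ 1 := linExp_ne_one θ hθ k hk
  set F : ℕ → ℂ := fun n => linExp θ n * (starRingEnd ℂ) (g n) with hF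
  have hFnorm : ∀ n, ‖F n‖ ≤ C := by
    intro n
    rw [hF]
    simp only [norm_mul, linExp_norm, one_mul]
    simpa using hC n
  set u : ℕ → ℂ := fun N => (1 / (N : ℂ)) * ∑ n ∈ Finset.range N, F n with hu
  set v : ℕ → ℂ := fun N =>
    (1 / (N : ℂ)) * ∑ n ∈ Finset.range N, linExp θ n * (starRingEnd ℂ) (g (n + k)) with hv
  -- Claim A : v - u → 0 along ω
  have claimA : Filter.Tendsto (fun N => v N - u N) (ω : Filter ℕ) (nhds 0) := by
    rw [tendsto_zero_iff_norm_tendsto_zero]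
    have hsqrt : Filter.Tendsto
        (fun N : ℕ => Real.sqrt ((∑ n ∈ Finset.range N, ‖g (n + k) - g n‖ ^ 2) / N))
        (ω : Filter ℕ) (nhds 0) := by
      have := (Real.continuous_sqrt.tendsto 0).comp hps
      simpa only [Function.comp_def, Real.sqrt_zero] using this
    apply squeeze_zero (fun N => norm_nonneg _) _ hsqrt
    intro N
    -- ‖v N - u N‖ ≤ (1/N) ∑ ‖g (n+k) - g n‖ ≤ sqrt(mean square)
    set d : ℕ → ℝ := fun n => ‖g (n + k) - g n‖ with hd
    have step1 : ‖v N - u N‖ ≤ (∑ n ∈ Finset.range N, d n) / N := by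
      have : v N - u N = (1 / (N : ℂ)) *
          ∑ n ∈ Finset.range N, linExp θ n * ((starRingEnd ℂ) (g (n + k)) - (starRingEnd ℂ) (g n)) := by
        rw [hv, hu, ← mul_sub, ← Finset.sum_sub_distrib]
        congr 1
        apply Finset.sum_congr rfl
        intro n _
        rw [hF]
        ring
      rw [this, norm_mul]
      have hnn : ‖(1 : ℂ) / (N : ℂ)‖ = 1 / (N : ℝ) := by
        simp
      rw [hnn]
      have heq : (∑ n ∈ Finset.range N, d n) / (N : ℝ)
          = (1 / (N : ℝ)) * ∑ n ∈ Finset.range N, d n := by ring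
      rw [heq]
      apply mul_le_mul_of_nonneg_left _ (by positivity)
      calc ‖∑ n ∈ Finset.range N, linExp θ n * ((starRingEnd ℂ) (g (n + k)) - (starRingEnd ℂ) (g n))‖
          ≤ ∑ n ∈ Finset.range N, ‖linExp θ n * ((starRingEnd ℂ) (g (n + k)) - (starRingEnd ℂ) (g n))‖ :=
            norm_sum_le _ _
        _ ≤ ∑ n ∈ Finset.range N, d n := by
            apply Finset.sum_le_sum
            intro n _
            rw [norm_mul, linExp_norm, one_mul, ← map_sub]
            exact le_of_eq (RCLike.norm_conj _)
    have step2 : (∑ n ∈ Finset.range N, d n) / N ≤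
        Real.sqrt ((∑ n ∈ Finset.range N, d n ^ 2) / N) := by
      apply Real.le_sqrt_of_sq_le
      rcases Nat.eq_zero_or_pos N with h | h
      · simp [h]
      have hcs : (∑ n ∈ Finset.range N, d n) ^ 2 ≤ N * ∑ n ∈ Finset.range N, d n ^ 2 := by
        have := sq_sum_le_card_mul_sum_sq (s := Finset.range N) (f := d)
        simpa using this
      have hN : (0 : ℝ) < N := by exact_mod_cast h
      rw [div_pow, div_le_div_iff₀ (by positivity) hN]
      calc (∑ n ∈ Finset.range N, d n) ^ 2 * N ≤ (N * ∑ n ∈ Finset.range N, d n ^ 2) * N :=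
            mul_le_mul_of_nonneg_right hcs hN.le
        _ = (∑ n ∈ Finset.range N, d n ^ 2) * (N : ℝ) ^ 2 := by ring
    exact step1.trans step2
  -- Claim B : lam * v - u → 0 along ω
  have claimB : Filter.Tendsto (fun N => lam * v N - u N) (ω : Filter ℕ) (nhds 0) := by
    rw [tendsto_zero_iff_norm_tendsto_zero]
    have hbound : Filter.Tendsto (fun N : ℕ => (2 * k * C) / N) atTop (nhds 0) :=
      tendsto_const_div_atTop_nhds_zero_nat _
    have hbound' : Filter.Tendsto (fun N : ℕ => (2 * k * C) / N) (ω : Filter ℕ) (nhds 0) :=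
      hbound.mono_left (by rw [← Nat.cofinite_eq_atTop]; exact hω)
    apply squeeze_zero (fun N => norm_nonneg _) _ hbound'
    intro N
    have key : lam * v N = (1 / (N : ℂ)) * ∑ n ∈ Finset.range N, F (n + k) := by
      rw [hv, ← mul_assoc, mul_comm lam, mul_assoc, Finset.mul_sum]
      congr 1
      apply Finset.sum_congr rfl
      intro n _
      show lam * (linExp θ n * (starRingEnd ℂ) (g (n + k)))
          = linExp θ (n + k) * (starRingEnd ℂ) (g (n + k))
      rw [linExp_add]
      ring
    have reindex : ∑ n ∈ Finset.range N, F (n + k)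
        = ∑ i ∈ Finset.Ico k (N + k), F i := by
      rw [Finset.sum_Ico_eq_sum_range]
      simp only [Nat.add_sub_cancel]
      apply Finset.sum_congr rfl
      intro n _
      rw [add_comm]
    have split1 : ∑ i ∈ Finset.Ico k (N + k), F i
        = ∑ i ∈ Finset.range (N + k), F i - ∑ i ∈ Finset.range k, F i := by
      rw [eq_sub_iff_add_eq, add_comm, Finset.range_eq_Ico, Finset.range_eq_Ico]
      exact Finset.sum_Ico_consecutive _ (Nat.zero_le _) (Nat.le_add_left _ _)
    have split2 : ∑ i ∈ Finset.range N, F i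
        = ∑ i ∈ Finset.range (N + k), F i - ∑ i ∈ Finset.Ico N (N + k), F i := by
      rw [eq_sub_iff_add_eq, Finset.range_eq_Ico, Finset.range_eq_Ico]
      exact Finset.sum_Ico_consecutive _ (Nat.zero_le _) (Nat.le_add_right _ _)
    have key2 : lam * v N - u N = (1 / (N : ℂ)) *
        (∑ i ∈ Finset.Ico N (N + k), F i - ∑ i ∈ Finset.range k, F i) := by
      rw [key, hu, ← mul_sub, reindex, split1, split2]
      ring_nf
    rw [key2, norm_mul]
    have hnn : ‖(1 : ℂ) / (N : ℂ)‖ = 1 / (N : ℝ) := by simp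
    rw [hnn]
    have hb1 : ‖∑ i ∈ Finset.Ico N (N + k), F i‖ ≤ k * C := by
      calc ‖∑ i ∈ Finset.Ico N (N + k), F i‖ ≤ ∑ i ∈ Finset.Ico N (N + k), C :=
            norm_sum_le_of_le _ (fun i _ => hFnorm i)
        _ = k * C := by simp [Nat.add_sub_cancel_left]
    have hb2 : ‖∑ i ∈ Finset.range k, F i‖ ≤ k * C := by
      calc ‖∑ i ∈ Finset.range k, F i‖ ≤ ∑ i ∈ Finset.range k, C :=
            norm_sum_le_of_le _ (fun i _ => hFnorm i)
        _ = k * C := by simp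
    calc (1 / (N : ℝ)) * ‖∑ i ∈ Finset.Ico N (N + k), F i - ∑ i ∈ Finset.range k, F i‖
        ≤ (1 / (N : ℝ)) * (k * C + k * C) := by
          apply mul_le_mul_of_nonneg_left _ (by positivity)
          exact (norm_sub_le _ _).trans (add_le_add hb1 hb2)
      _ = (2 * k * C) / N := by ring
  -- Combine
  have hcomb : Filter.Tendsto (fun N => (lam - 1) * u N) (ω : Filter ℕ) (nhds 0) := by
    have h1 : Filter.Tendsto (fun N => lam * (u N - v N) + (lam * v N - u N))
        (ω : Filter ℕ) (nhds 0) := by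
      have hA' : Filter.Tendsto (fun N => lam * (u N - v N)) (ω : Filter ℕ) (nhds 0) := by
        have := claimA.neg.const_mul lam
        simpa [neg_sub] using this
      simpa using hA'.add claimB
    apply h1.congr
    intro N
    ring
  have hne : lam - 1 ≠ 0 := sub_ne_zero.mpr hlam1
  have : Filter.Tendsto (fun N => (lam - 1)⁻¹ * ((lam - 1) * u N)) (ω : Filter ℕ) (nhds 0) := by
    simpa using hcomb.const_mul (lam - 1)⁻¹
  have hfin : Filter.Tendsto u (ω : Filter ℕ) (nhds 0) := by
    apply this.congr
    intro N
    field_simp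
  exact hfin
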